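/- Let à = [[A,B],[C,D]] be an invertible complex block matrix with A and D invertible, suppose T = A^{-1}BD^{-1}C is diagonalizable, and let the two-level preconditioner M^{-1} be defined by Algorithm with block-Jacobi smoother S^{-1} = diag(A^{-1}, D^{-1}), ideal transfers P = [[−A^{-1}B],[I]], R = [−CA^{-1}, I], inherited invertible coarse operator M_0 = RÃP, and m pre- and post-smoothing steps with α_j = 1/(1 − cos(2πj/(2m+1))). Then the spectrum of the preconditioned matrix M^{-1}Ã is contained in {1, 1 − 1/(2m+1)^2}. -/

import Mathlib

open Matrix Finset

section auxA
open Polynomial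


noncomputable def PhiTL (q : Polynomial ℂ) : Polynomial ℂ :=
  q.sum fun k a => Polynomial.C a * Polynomial.X ^ ((k + 1) / 2)

lemma sandwichTL {A : Type*} [Ring A] [Algebra ℂ A] (N E : A)
    (hEE : E * E = E) (hENE : E * N * E = N * N * E)
    (hcomm : Commute (N * N) E) (q : Polynomial ℂ) :
    E * (aeval N q) * E = aeval (N * N) (PhiTL q) * E := by
  have base : ∀ k : ℕ, E * N ^ k * E = (N * N) ^ ((k + 1) / 2) * E := by
    intro k
    rcases Nat.even_or_odd k with ⟨t, rfl⟩ | ⟨t, rfl⟩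
    · have hN : N ^ (t + t) = (N * N) ^ t := by
        rw [← sq, ← pow_mul, two_mul]
      have h2 : (t + t + 1) / 2 = t := by omega
      rw [hN, h2, (hcomm.pow_left t).symm.eq, mul_assoc, hEE]
    · have hN : N ^ (2 * t + 1) = (N * N) ^ t * N := by
        rw [← sq, ← pow_mul, pow_succ]
      have h2 : (2 * t + 1 + 1) / 2 = t + 1 := by omega
      rw [hN, h2, ← mul_assoc, (hcomm.pow_left t).symm.eq, mul_assoc, mul_assoc,
        ← mul_assoc E N E, hENE, ← mul_assoc, ← pow_succ]
  rw [aeval_def, eval₂_eq_sum, Polynomial.sum_def]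
  rw [PhiTL, Polynomial.sum_def, map_sum]
  rw [Finset.sum_mul, Finset.mul_sum, Finset.sum_mul]
  refine Finset.sum_congr rfl fun k _ => ?_
  rw [← Algebra.smul_def]
  rw [_root_.map_mul, aeval_C, map_pow, aeval_X, ← Algebra.smul_def]
  rw [mul_smul_comm, smul_mul_assoc, smul_mul_assoc, base k]

lemma phi_evalTL (q : Polynomial ℂ) (z : ℂ) :
    2 * (PhiTL q).eval (z * z) = (1 + z) * q.eval z + (1 - z) * q.eval (-z) := by
  rw [PhiTL, Polynomial.sum_def, Polynomial.eval_finset_sum,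
    Polynomial.eval_eq_sum, Polynomial.eval_eq_sum, Polynomial.sum_def, Polynomial.sum_def,
    Finset.mul_sum, Finset.mul_sum, Finset.mul_sum, ← Finset.sum_add_distrib]
  refine Finset.sum_congr rfl fun k _ => ?_
  rw [eval_mul, eval_C, eval_pow, eval_X]
  rcases Nat.even_or_odd k with ⟨t, rfl⟩ | ⟨t, rfl⟩
  · have h2 : (t + t + 1) / 2 = t := by omega
    have hneg : (-z) ^ (t + t) = z ^ (t + t) := Even.neg_pow ⟨t, rfl⟩ z
    rw [h2, hneg]
    ring
  · have h2 : (2 * t + 1 + 1) / 2 = t + 1 := by omega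
    have hneg : (-z) ^ (2 * t + 1) = -z ^ (2 * t + 1) := Odd.neg_pow ⟨t, rfl⟩ z
    rw [h2, hneg]
    ring

end auxA

section auxScalar
open Complex Polynomial

-- G1
lemma prod_rootsTL (n : ℕ) (hn : 0 < n) (w : ℂ) :
    ∏ k ∈ Finset.range n, (w - Complex.exp (2 * Real.pi * I / n) ^ k) = w ^ n - 1 := by
  have hprim : IsPrimitiveRoot (Complex.exp (2 * Real.pi * I / n)) n :=
    Complex.isPrimitiveRoot_exp _ (by omega)
  have hpoly := X_pow_sub_C_eq_prod hprim hn (one_pow n)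
  have := congrArg (Polynomial.eval w) hpoly
  simpa [Polynomial.eval_prod] using this.symm

-- G4
lemma prod_one_subTL (n : ℕ) (hn : 0 < n) :
    ∏ k ∈ Finset.Ico 1 n, (1 - Complex.exp (2 * Real.pi * I / n) ^ k) = (n : ℂ) := by
  set ω := Complex.exp (2 * Real.pi * I / n) with hω
  have hpoly : (∏ k ∈ Finset.Ico 1 n, ((X:ℂ[X]) - Polynomial.C (ω ^ k))) * (X - Polynomial.C 1)
      = (∑ i ∈ Finset.range n, (X : ℂ[X]) ^ i) * (X - Polynomial.C 1) := by
    have h1 : ∏ k ∈ Finset.range n, ((X : ℂ[X]) - Polynomial.C (ω ^ k))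
        = X ^ n - Polynomial.C 1 := by
      have hprim : IsPrimitiveRoot ω n := Complex.isPrimitiveRoot_exp _ (by omega)
      have := X_pow_sub_C_eq_prod hprim hn (one_pow n)
      simpa using this.symm
    have h2 : (∑ i ∈ Finset.range n, (X : ℂ[X]) ^ i) * (X - Polynomial.C 1)
        = X ^ n - Polynomial.C 1 := by
      simpa using geom_sum_mul (X : ℂ[X]) n
    rw [h2, ← h1, Finset.range_eq_Ico, Finset.prod_eq_prod_Ico_succ_bot hn]
    simp [mul_comm]
  have hcancel : ∏ k ∈ Finset.Ico 1 n, ((X:ℂ[X]) - Polynomial.C (ω ^ k))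
      = ∑ i ∈ Finset.range n, (X : ℂ[X]) ^ i :=
    mul_right_cancel₀ (Polynomial.X_sub_C_ne_zero 1) hpoly
  have := congrArg (Polynomial.eval 1) hcancel
  simpa [Polynomial.eval_prod, Polynomial.eval_finset_sum] using this

-- G5 pairing
lemma pairingTL (m : ℕ) (f : ℕ → ℂ) :
    ∏ j ∈ Finset.Icc 1 m, (f j * f (2 * m + 1 - j))
      = ∏ k ∈ Finset.Ico 1 (2 * m + 1), f k := by
  rw [Finset.prod_mul_distrib]
  have hIcc : Finset.Icc 1 m = Finset.Ico 1 (m + 1) := by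
    ext a; simp only [Finset.mem_Icc, Finset.mem_Ico]; omega
  have hre : ∏ j ∈ Finset.Icc 1 m, f (2 * m + 1 - j)
      = ∏ k ∈ Finset.Ico (m + 1) (2 * m + 1), f k := by
    rw [hIcc]
    refine Finset.prod_nbij' (fun j => 2 * m + 1 - j) (fun k => 2 * m + 1 - k) ?_ ?_ ?_ ?_ ?_
    · intro a ha; simp only [Finset.mem_Ico] at *; omega
    · intro a ha; simp only [Finset.mem_Ico] at *; omega
    · intro a ha; simp only [Finset.mem_Ico] at ha; omega
    · intro a ha; simp only [Finset.mem_Ico] at ha; omega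
    · intro a ha; rfl
  rw [hre, hIcc, Finset.prod_Ico_consecutive _ (by omega) (by omega)]

lemma cos_castTL (m j : ℕ) (hj : j ≤ 2 * m + 1) :
    2 * ((Real.cos (2 * Real.pi * (j:ℝ) / (2 * (m:ℝ) + 1)) : ℂ))
      = Complex.exp (2 * Real.pi * I / ((2*m+1 : ℕ) : ℂ)) ^ j
        + Complex.exp (2 * Real.pi * I / ((2*m+1 : ℕ) : ℂ)) ^ (2 * m + 1 - j) := by
  have hC : (2 * (m:ℂ) + 1) ≠ 0 := by
    intro h
    have := congrArg Complex.re h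
    push_cast at this
    norm_num at this
    linarith [Nat.cast_nonneg (α := ℝ) m]
  set θ : ℝ := 2 * Real.pi * (j:ℝ) / (2 * (m:ℝ) + 1) with hθ
  have hθc : (θ : ℂ) = 2 * Real.pi * (j:ℂ) / (2 * (m:ℂ) + 1) := by
    push_cast [hθ]; ring
  have e1 : Complex.exp (2 * Real.pi * I / ((2*m+1 : ℕ) : ℂ)) ^ j
      = Complex.exp ((θ:ℂ) * I) := by
    rw [← Complex.exp_nat_mul]
    congr 1
    rw [hθc]
    push_cast
    field_simp
  have e2 : Complex.exp (2 * Real.pi * I / ((2*m+1 : ℕ) : ℂ)) ^ (2 * m + 1 - j)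
      = Complex.exp (-(θ:ℂ) * I) := by
    rw [← Complex.exp_nat_mul]
    have : ((2 * m + 1 - j : ℕ) : ℂ) * (2 * Real.pi * I / ((2*m+1 : ℕ) : ℂ))
        = 2 * Real.pi * I + -(θ:ℂ) * I := by
      rw [hθc]
      push_cast [Nat.cast_sub hj]
      field_simp
      ring
    rw [this, Complex.exp_add, Complex.exp_two_pi_mul_I, one_mul]
  rw [e1, e2, Complex.ofReal_cos, Complex.two_cos]

lemma scalar_keyTL (m : ℕ) (α : ℕ → ℂ)
    (hα : ∀ j ∈ Finset.Icc 1 m,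
      α j = (1 - (Real.cos (2 * Real.pi * j / (2 * m + 1)) : ℂ))⁻¹) (z : ℂ) :
    (1 + z) * ((∏ j ∈ Finset.Icc 1 m, (1 - α j - α j * z)) *
        ∏ j ∈ Finset.Icc 1 m, (1 - α j - α j * z))
      + (1 - z) * ((∏ j ∈ Finset.Icc 1 m, (1 - α j - α j * (-z))) *
        ∏ j ∈ Finset.Icc 1 m, (1 - α j - α j * (-z)))
      = 2 / (2 * (m:ℂ) + 1) ^ 2 := by
  have hnC : (2 * (m:ℂ) + 1) ≠ 0 := by
    have h : (2 * (m:ℂ) + 1) = ((2*m+1 : ℕ) : ℂ) := by push_cast; ring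
    rw [h]
    simp only [Ne, Nat.cast_eq_zero]; omega
  set ω : ℂ := Complex.exp (2 * Real.pi * I / ((2*m+1 : ℕ) : ℂ)) with hω
  have hprim : IsPrimitiveRoot ω (2*m+1) := Complex.isPrimitiveRoot_exp _ (by omega)
  obtain ⟨s, hs⟩ := IsAlgClosed.exists_pow_nat_eq (k := ℂ) (z^2 - 1) (n := 2) (by norm_num)
  set w : ℂ := z + s with hwdef
  have hw : w * w + 1 = 2 * z * w := by
    rw [hwdef]; linear_combination hs
  have hw0 : w ≠ 0 := by
    intro h
    rw [h] at hw
    simp at hw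
  -- per-factor identities
  have facts : ∀ j ∈ Finset.Icc 1 m,
      (1 - α j - α j * z) * (w * ((1 - ω^j) * (1 - ω^(2*m+1-j))))
          = -((w + ω^j) * (w + ω^(2*m+1-j)))
      ∧ (1 - α j - α j * (-z)) * (w * ((1 - ω^j) * (1 - ω^(2*m+1-j))))
          = (w - ω^j) * (w - ω^(2*m+1-j)) := by
    intro j hj
    simp only [Finset.mem_Icc] at hj
    set c : ℂ := (Real.cos (2 * Real.pi * j / (2 * m + 1)) : ℂ) with hc
    have h2c : 2 * c = ω^j + ω^(2*m+1-j) := cos_castTL m j (by omega)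
    have hmul : ω^j * ω^(2*m+1-j) = 1 := by
      rw [← pow_add]
      have hnj : j + (2*m+1 - j) = 2*m+1 := by omega
      rw [hnj]
      exact hprim.pow_eq_one
    have h1c : (1 - ω^j) * (1 - ω^(2*m+1-j)) = 2 * (1 - c) := by
      linear_combination hmul + h2c
    have hcne : (1:ℂ) - c ≠ 0 := by
      intro h
      have h0 : (1 - ω^j) * (1 - ω^(2*m+1-j)) = 0 := by rw [h1c, h, mul_zero]
      rcases mul_eq_zero.mp h0 with h' | h'
      · have hone : ω ^ j = 1 := by linear_combination -h'
        exact hprim.pow_ne_one_of_pos_of_lt (by omega) (by omega) hone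
      · have hone : ω ^ (2*m+1-j) = 1 := by linear_combination -h'
        exact hprim.pow_ne_one_of_pos_of_lt (by omega) (by omega) hone
    have hαc : α j * (1 - c) = 1 := by
      rw [hα j (Finset.mem_Icc.mpr hj), ← hc]
      exact inv_mul_cancel₀ hcne
    constructor
    · rw [h1c]
      linear_combination (-2*w - 2*w*z) * hαc + (-w) * h2c + hmul + hw
    · rw [h1c]
      linear_combination (-2*w + 2*w*z) * hαc + (-w) * h2c - hmul - hw
  -- products of the factor identities
  have hcard : (Finset.Icc 1 m).card = m := by simp [Nat.card_Icc]
  have hd : ∏ j ∈ Finset.Icc 1 m, ((1 - ω^j) * (1 - ω^(2*m+1-j))) = ((2*m+1 : ℕ) : ℂ) := by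
    rw [pairingTL m (fun k => 1 - ω^k)]
    exact prod_one_subTL (2*m+1) (by omega)
  have hEz : (∏ j ∈ Finset.Icc 1 m, (1 - α j - α j * z)) * (w^m * ((2*m+1 : ℕ) : ℂ))
      = (-1)^m * ∏ k ∈ Finset.Ico 1 (2*m+1), (w + ω^k) := by
    have h := Finset.prod_congr rfl (fun j hj => (facts j hj).1)
    rw [Finset.prod_mul_distrib, Finset.prod_mul_distrib, Finset.prod_const, hcard, hd] at h
    rw [h]
    have : ∀ j ∈ Finset.Icc 1 m, -((w + ω^j) * (w + ω^(2*m+1-j)))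
        = (-1) * ((w + ω^j) * (w + ω^(2*m+1-j))) := by intros; ring
    rw [Finset.prod_congr rfl this, Finset.prod_mul_distrib, Finset.prod_const, hcard,
      pairingTL m (fun k => w + ω^k)]
  have hEn : (∏ j ∈ Finset.Icc 1 m, (1 - α j - α j * (-z))) * (w^m * ((2*m+1 : ℕ) : ℂ))
      = ∏ k ∈ Finset.Ico 1 (2*m+1), (w - ω^k) := by
    have h := Finset.prod_congr rfl (fun j hj => (facts j hj).2)
    rw [Finset.prod_mul_distrib, Finset.prod_mul_distrib, Finset.prod_const, hcard, hd] at h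
    rw [h, pairingTL m (fun k => w - ω^k)]
  -- the two global root products
  have hBw : (w - 1) * ∏ k ∈ Finset.Ico 1 (2*m+1), (w - ω^k) = w^(2*m+1) - 1 := by
    have h := prod_rootsTL (2*m+1) (by omega) w
    rw [Finset.range_eq_Ico, Finset.prod_eq_prod_Ico_succ_bot (by omega : 0 < 2*m+1),
      show (0+1 : ℕ) = 1 from rfl, pow_zero] at h
    exact h
  have hAw : (w + 1) * ∏ k ∈ Finset.Ico 1 (2*m+1), (w + ω^k) = w^(2*m+1) + 1 := by
    have h := prod_rootsTL (2*m+1) (by omega) (-w)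
    rw [Finset.range_eq_Ico, Finset.prod_eq_prod_Ico_succ_bot (by omega : 0 < 2*m+1),
      show (0+1 : ℕ) = 1 from rfl, pow_zero] at h
    have hneg : ∀ k ∈ Finset.Ico 1 (2*m+1), (-w - ω^k) = (-1) * (w + ω^k) := by intros; ring
    rw [Finset.prod_congr rfl hneg, Finset.prod_mul_distrib, Finset.prod_const] at h
    have hcard2 : (Finset.Ico 1 (2*m+1)).card = 2*m := by simp [Nat.card_Ico]
    rw [hcard2] at h
    have hoddw : (-w)^(2*m+1) = -w^(2*m+1) := Odd.neg_pow ⟨m, by ring⟩ w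
    have hev1 : ((-1:ℂ))^(2*m) = 1 := Even.neg_one_pow ⟨m, (two_mul m).symm ▸ rfl⟩
    rw [hoddw, hev1, one_mul] at h
    linear_combination -h
  -- cast
  have hcast : ((2*m+1 : ℕ) : ℂ) = 2 * (m:ℂ) + 1 := by push_cast; ring
  rw [hcast] at hEz hEn
  set ν : ℂ := 2 * (m:ℂ) + 1
  set Ez := ∏ j ∈ Finset.Icc 1 m, (1 - α j - α j * z) with hEzdef
  set En := ∏ j ∈ Finset.Icc 1 m, (1 - α j - α j * (-z)) with hEndef
  set P := ∏ k ∈ Finset.Ico 1 (2*m+1), (w + ω^k) with hP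
  set Q := ∏ k ∈ Finset.Ico 1 (2*m+1), (w - ω^k) with hQ
  have hsq : ((-1:ℂ))^m * (-1:ℂ)^m = 1 := by
    rw [← pow_add, ← two_mul, pow_mul]; norm_num
  have r1' : (Ez * (w^m * ν)) * (Ez * (w^m * ν)) = P * P := by
    rw [hEz]; linear_combination P * P * hsq
  have r2' : (En * (w^m * ν)) * (En * (w^m * ν)) = Q * Q := by
    rw [hEn]
  -- final cancellation
  have hc0 : (2 * w^(2*m+1) * ν^2) ≠ 0 := by
    apply mul_ne_zero (mul_ne_zero two_ne_zero (pow_ne_zero _ hw0))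
    exact pow_ne_zero _ hnC
  apply mul_right_cancel₀ hc0
  have hrhs : 2 / ν^2 * (2 * w^(2*m+1) * ν^2) = 4 * w^(2*m+1) := by
    field_simp
    ring
  rw [hrhs]
  linear_combination (2*w*(1+z)) * r1' + (2*w*(1-z)) * r2'
    + ((w+1)*P + (w^(2*m+1)+1)) * hAw - ((w-1)*Q + (w^(2*m+1)-1)) * hBw
    + (Q*Q - P*P) * hw

end auxScalar

noncomputable def ppTL (a : ℂ) : Polynomial ℂ :=
  Polynomial.C (1 - a) - Polynomial.C a * Polynomial.X

/-- Clustered spectrum of the symmetric two-level preconditioner: for an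
invertible block matrix `Ã` with `A, D` invertible, `T = A⁻¹BD⁻¹C`
diagonalizable, block-Jacobi smoother, ideal transfers, inherited invertible
coarse operator, and relaxation parameters `α_j = 1/(1 − cos(2πj/(2m+1)))`,
the spectrum of `M⁻¹Ã = I − E_m` is contained in `{1, 1 − 1/(2m+1)²}`. -/
theorem two_level_clustering
    {n p : Type*} [Fintype n] [Fintype p] [DecidableEq n] [DecidableEq p]
    (A : Matrix n n ℂ) (B : Matrix n p ℂ) (C : Matrix p n ℂ) (D : Matrix p p ℂ)
    (hA : IsUnit A.det) (hD : IsUnit D.det)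
    (hAtil : IsUnit (Matrix.fromBlocks A B C D).det)
    (hT : ∃ (W : Matrix n n ℂ) (d : n → ℂ), IsUnit W.det ∧
      A⁻¹ * B * D⁻¹ * C = W * Matrix.diagonal d * W⁻¹)
    (m : ℕ) (hm : 1 ≤ m) (α : ℕ → ℂ)
    (hα : ∀ j ∈ Finset.Icc 1 m,
      α j = (1 - (Real.cos (2 * Real.pi * j / (2 * m + 1)) : ℂ))⁻¹)
    (hM₀ : IsUnit (Matrix.fromCols (-(C * A⁻¹)) (1 : Matrix p p ℂ) *
        Matrix.fromBlocks A B C D *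
        Matrix.fromRows (-(A⁻¹ * B)) (1 : Matrix p p ℂ)).det) :
    let Atil : Matrix (n ⊕ p) (n ⊕ p) ℂ := Matrix.fromBlocks A B C D
    let Sinv : Matrix (n ⊕ p) (n ⊕ p) ℂ := Matrix.fromBlocks A⁻¹ 0 0 D⁻¹
    let P : Matrix (n ⊕ p) p ℂ := Matrix.fromRows (-(A⁻¹ * B)) (1 : Matrix p p ℂ)
    let R : Matrix p (n ⊕ p) ℂ := Matrix.fromCols (-(C * A⁻¹)) (1 : Matrix p p ℂ)
    let M₀ : Matrix p p ℂ := R * Atil * P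
    let Es : ℕ → Matrix (n ⊕ p) (n ⊕ p) ℂ := fun j =>
      (1 : Matrix (n ⊕ p) (n ⊕ p) ℂ) - α j • (Sinv * Atil)
    let Ec : Matrix (n ⊕ p) (n ⊕ p) ℂ :=
      (1 : Matrix (n ⊕ p) (n ⊕ p) ℂ) - P * M₀⁻¹ * R * Atil
    let Em : Matrix (n ⊕ p) (n ⊕ p) ℂ :=
      (List.ofFn (fun i : Fin m => Es (m - (i : ℕ)))).prod * Ec *
        (List.ofFn (fun i : Fin m => Es ((i : ℕ) + 1))).prod
    spectrum ℂ ((1 : Matrix (n ⊕ p) (n ⊕ p) ℂ) - Em)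
      ⊆ {1, 1 - 1 / ((2 * (m : ℂ) + 1) ^ 2)} := by
  intro Atil Sinv P R M₀ Es Ec Em
  classical
  have hAinv : A⁻¹ * A = 1 := Matrix.nonsing_inv_mul A hA
  have hDinv : D⁻¹ * D = 1 := Matrix.nonsing_inv_mul D hD
  set X : Matrix n p ℂ := A⁻¹ * B with hXdef
  set Y : Matrix p n ℂ := D⁻¹ * C with hYdef
  set NN : Matrix (n ⊕ p) (n ⊕ p) ℂ := Matrix.fromBlocks 0 X Y 0 with hNdef
  -- Sinv * Atil = 1 + NN
  have hSA : Sinv * Atil = 1 + NN := by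
    show Matrix.fromBlocks A⁻¹ 0 0 D⁻¹ * Matrix.fromBlocks A B C D = 1 + NN
    rw [hNdef, Matrix.fromBlocks_multiply, ← Matrix.fromBlocks_one, Matrix.fromBlocks_add]
    congr 1 <;> simp [hAinv, hDinv, hXdef, hYdef]
  -- the coarse operator
  have hM0 : M₀ = D - C * X := by
    show R * Atil * P = D - C * X
    have hRA : R * Atil = Matrix.fromCols 0 (D - C * X) := by
      show Matrix.fromCols (-(C * A⁻¹)) 1 * Matrix.fromBlocks A B C D = _
      rw [Matrix.fromCols_mul_fromBlocks]
      have h1 : -(C * A⁻¹) * A + (1 : Matrix p p ℂ) * C = 0 := by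
        rw [Matrix.neg_mul, Matrix.mul_assoc, hAinv, Matrix.mul_one, Matrix.one_mul]
        exact neg_add_cancel C
      have h2 : -(C * A⁻¹) * B + (1 : Matrix p p ℂ) * D = D - C * X := by
        rw [Matrix.neg_mul, Matrix.mul_assoc, Matrix.one_mul, hXdef]
        abel
      rw [h1, h2]
    show (R * Atil) * P = D - C * X
    rw [hRA]
    show Matrix.fromCols 0 (D - C * X) * Matrix.fromRows (-X) 1 = D - C * X
    rw [Matrix.fromCols_mul_fromRows, Matrix.zero_mul, Matrix.mul_one, zero_add]
  have hM0unit : IsUnit M₀.det := hM₀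
  have hM0inv : M₀⁻¹ * M₀ = 1 := Matrix.nonsing_inv_mul M₀ hM0unit
  -- coarse error operator
  have hEc : Ec = Matrix.fromBlocks 1 X 0 0 := by
    show (1 : Matrix (n ⊕ p) (n ⊕ p) ℂ) - P * M₀⁻¹ * R * Atil = _
    have hRA : R * Atil = Matrix.fromCols 0 M₀ := by
      rw [hM0]
      show Matrix.fromCols (-(C * A⁻¹)) 1 * Matrix.fromBlocks A B C D = _
      rw [Matrix.fromCols_mul_fromBlocks]
      have h1 : -(C * A⁻¹) * A + (1 : Matrix p p ℂ) * C = 0 := by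
        rw [Matrix.neg_mul, Matrix.mul_assoc, hAinv, Matrix.mul_one, Matrix.one_mul]
        exact neg_add_cancel C
      have h2 : -(C * A⁻¹) * B + (1 : Matrix p p ℂ) * D = D - C * X := by
        rw [Matrix.neg_mul, Matrix.mul_assoc, Matrix.one_mul, hXdef]
        abel
      rw [h1, h2]
    have hPMR : P * M₀⁻¹ * R * Atil = Matrix.fromBlocks 0 (-X) 0 1 := by
      rw [Matrix.mul_assoc (P * M₀⁻¹) R Atil, hRA, Matrix.mul_fromCols, Matrix.mul_zero,
        Matrix.mul_assoc, hM0inv, Matrix.mul_one]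
      show Matrix.fromCols 0 (Matrix.fromRows (-X) 1) = _
      rw [← Matrix.fromRows_zero, Matrix.fromCols_fromRows_eq_fromBlocks]
    rw [hPMR, ← Matrix.fromBlocks_one]
    ext (i | i) (j | j) <;>
      simp [Matrix.sub_apply, Matrix.fromBlocks]
  -- smoother algebra
  have hEcEc : Ec * Ec = Ec := by
    rw [hEc, Matrix.fromBlocks_multiply]
    simp
  have hENE : Ec * NN * Ec = NN * NN * Ec := by
    rw [hEc, hNdef, Matrix.fromBlocks_multiply, Matrix.fromBlocks_multiply,
      Matrix.fromBlocks_multiply, Matrix.fromBlocks_multiply]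
    simp [Matrix.mul_assoc]
  have hcomm : Commute (NN * NN) Ec := by
    show _ * _ = _ * _
    rw [hEc, hNdef, Matrix.fromBlocks_multiply, Matrix.fromBlocks_multiply,
      Matrix.fromBlocks_multiply]
    simp [Matrix.mul_assoc]
  have hEs : ∀ j : ℕ, Es j = Polynomial.aeval NN (ppTL (α j)) := by
    intro j
    show (1 : Matrix (n ⊕ p) (n ⊕ p) ℂ) - α j • (Sinv * Atil) = _
    rw [hSA, ppTL, map_sub, _root_.map_mul, Polynomial.aeval_C, Polynomial.aeval_C,
      Polynomial.aeval_X, Algebra.algebraMap_eq_smul_one, Algebra.algebraMap_eq_smul_one,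
      smul_mul_assoc, Matrix.one_mul, smul_add, sub_smul, one_smul]
    abel
  -- list products as aeval of polynomial products
  set lq : Polynomial ℂ := (List.ofFn (fun i : Fin m => ppTL (α (m - (i:ℕ))))).prod with hlq
  set rq : Polynomial ℂ := (List.ofFn (fun i : Fin m => ppTL (α ((i:ℕ) + 1)))).prod with hrq
  have hL : (List.ofFn (fun i : Fin m => Es (m - (i:ℕ)))).prod = Polynomial.aeval NN lq := by
    rw [hlq, map_list_prod, List.map_ofFn]
    exact congrArg List.prod (congrArg List.ofFn (funext fun i => hEs _))
  have hR : (List.ofFn (fun i : Fin m => Es ((i:ℕ) + 1))).prod = Polynomial.aeval NN rq := by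
    rw [hrq, map_list_prod, List.map_ofFn]
    exact congrArg List.prod (congrArg List.ofFn (funext fun i => hEs _))
  have hEmEq : Em = Polynomial.aeval NN lq * Ec * Polynomial.aeval NN rq := by
    show (List.ofFn (fun i : Fin m => Es (m - (i:ℕ)))).prod * Ec *
        (List.ofFn (fun i : Fin m => Es ((i:ℕ) + 1))).prod = _
    rw [hL, hR]
  set cc : ℂ := 1 / (2 * (m:ℂ) + 1) ^ 2 with hcc
  -- evaluation of the polynomial products
  have hIcc : Finset.Icc 1 m = Finset.Ico 1 (m + 1) := by
    ext a; simp only [Finset.mem_Icc, Finset.mem_Ico]; omega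
  have hevalr : ∀ t : ℂ, Polynomial.eval t rq = ∏ j ∈ Finset.Icc 1 m, (1 - α j - α j * t) := by
    intro t
    rw [hrq, Polynomial.eval_list_prod, List.map_ofFn, List.prod_ofFn]
    simp only [Function.comp]
    have h1 : ∀ i : Fin m, Polynomial.eval t (ppTL (α ((i:ℕ)+1)))
        = 1 - α ((i:ℕ)+1) - α ((i:ℕ)+1) * t := by
      intro i
      simp only [ppTL, Polynomial.eval_sub, Polynomial.eval_mul, Polynomial.eval_C,
        Polynomial.eval_X]
    have h2 : ∏ i : Fin m, Polynomial.eval t (ppTL (α ((i:ℕ)+1)))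
        = ∏ i : Fin m, (1 - α ((i:ℕ)+1) - α ((i:ℕ)+1) * t) :=
      Finset.prod_congr rfl fun i _ => h1 i
    rw [h2, Fin.prod_univ_eq_prod_range (fun i => 1 - α (i+1) - α (i+1) * t) m]
    rw [hIcc, Finset.prod_Ico_eq_prod_range]
    simp only [Nat.add_sub_cancel]
    exact Finset.prod_congr rfl fun i _ => by rw [Nat.add_comm]
  have hevall : ∀ t : ℂ, Polynomial.eval t lq = Polynomial.eval t rq := by
    intro t
    rw [hlq, Polynomial.eval_list_prod, List.map_ofFn, List.prod_ofFn]
    rw [hrq, Polynomial.eval_list_prod, List.map_ofFn, List.prod_ofFn]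
    simp only [Function.comp]
    rw [Fin.prod_univ_eq_prod_range (fun i => Polynomial.eval t (ppTL (α (m - i)))) m,
      Fin.prod_univ_eq_prod_range (fun i => Polynomial.eval t (ppTL (α (i + 1)))) m]
    rw [← Finset.prod_range_reflect (fun i => Polynomial.eval t (ppTL (α (i + 1)))) m]
    refine Finset.prod_congr rfl fun i hi => ?_
    simp only [Finset.mem_range] at hi
    exact congrArg (fun k => Polynomial.eval t (ppTL (α k))) (by omega : m - i = m - 1 - i + 1)
  -- the collapsed polynomial is constant
  have hPhiC : PhiTL (rq * lq) = Polynomial.C cc := by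
    apply Polynomial.funext
    intro x
    obtain ⟨u, hu⟩ := IsAlgClosed.exists_pow_nat_eq (k := ℂ) x (n := 2) (by norm_num)
    have hx : x = u * u := by rw [← hu]; ring
    rw [Polynomial.eval_C, hx]
    have hsum := phi_evalTL (rq * lq) u
    rw [Polynomial.eval_mul, Polynomial.eval_mul, hevall u, hevall (-u),
      hevalr u, hevalr (-u)] at hsum
    have hkey := scalar_keyTL m α hα u
    have h2cc : (2:ℂ) * Polynomial.eval (u * u) (PhiTL (rq * lq)) = 2 * cc := by
      rw [hsum, hkey, hcc]
      ring
    exact mul_left_cancel₀ two_ne_zero h2cc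
  -- the key quadratic identity
  have hEm2 : Em * Em = cc • Em := by
    have hq := sandwichTL NN Ec hEcEc hENE hcomm (rq * lq)
    rw [hPhiC, Polynomial.aeval_C, Algebra.algebraMap_eq_smul_one, smul_mul_assoc,
      Matrix.one_mul] at hq
    rw [hEmEq]
    calc (Polynomial.aeval NN lq * Ec * Polynomial.aeval NN rq) *
          (Polynomial.aeval NN lq * Ec * Polynomial.aeval NN rq)
        = Polynomial.aeval NN lq * ((Ec * (Polynomial.aeval NN (rq * lq)) * Ec) *
            Polynomial.aeval NN rq) := by
          rw [_root_.map_mul]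
          simp only [mul_assoc]
      _ = Polynomial.aeval NN lq * ((cc • Ec) * Polynomial.aeval NN rq) := by rw [hq]
      _ = cc • (Polynomial.aeval NN lq * Ec * Polynomial.aeval NN rq) := by
          simp only [smul_mul_assoc, mul_smul_comm, mul_assoc]
  -- spectral inclusion
  intro z hz
  by_contra hne
  simp only [Set.mem_insert_iff, Set.mem_singleton_iff, not_or] at hne
  obtain ⟨hz1, hz2⟩ := hne
  rw [spectrum.mem_iff] at hz
  apply hz
  set u : ℂ := z - 1 with hu
  have hu0 : u ≠ 0 := sub_ne_zero.mpr hz1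
  have huc : u + cc ≠ 0 := by
    intro h
    apply hz2
    rw [hcc]
    have : z = 1 - cc := by rw [hu] at h; linear_combination h
    rw [this, hcc]
  have hform : (algebraMap ℂ (Matrix (n ⊕ p) (n ⊕ p) ℂ) z) - (1 - Em)
      = u • (1 : Matrix (n ⊕ p) (n ⊕ p) ℂ) + Em := by
    rw [Algebra.algebraMap_eq_smul_one, hu, sub_smul, one_smul]
    abel
  have hunit : ((algebraMap ℂ (Matrix (n ⊕ p) (n ⊕ p) ℂ) z) - (1 - Em)) *
      (u⁻¹ • (1 : Matrix (n ⊕ p) (n ⊕ p) ℂ) - (u⁻¹ * (u + cc)⁻¹) • Em) = 1 := by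
    rw [hform]
    have expand : (u • (1 : Matrix (n ⊕ p) (n ⊕ p) ℂ) + Em) *
        (u⁻¹ • (1 : Matrix (n ⊕ p) (n ⊕ p) ℂ) - (u⁻¹ * (u + cc)⁻¹) • Em)
        = (u * u⁻¹) • (1 : Matrix (n ⊕ p) (n ⊕ p) ℂ)
          + (u⁻¹ - u * (u⁻¹ * (u + cc)⁻¹) - u⁻¹ * (u + cc)⁻¹ * cc) • Em := by
      simp only [mul_sub, add_mul, smul_mul_assoc, mul_smul_comm, Matrix.one_mul,
        Matrix.mul_one, smul_smul, hEm2, sub_smul, add_smul]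
      module
    rw [expand, mul_inv_cancel₀ hu0, one_smul]
    have hz0 : u⁻¹ - u * (u⁻¹ * (u + cc)⁻¹) - u⁻¹ * (u + cc)⁻¹ * cc = 0 := by
      field_simp
      ring
    rw [hz0, zero_smul, add_zero]
  exact ⟨⟨_, _, hunit, mul_eq_one_comm.mp hunit⟩, rfl⟩
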